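/- Let X be a separable Banach space, Y a Banach space, G ⊂ X open, and f : G → Y a mapping. Then the set of all points x ∈ G at which f is Lipschitz at x and Gâteaux differentiable at x but not Hadamard differentiable at x is σ-directionally porous. -/

import Mathlib

open Filter Metric Set Topology MeasureTheory

section CommonDefs
variable {X Y : Type*}

/-- `f` is (pointwise) Lipschitz at `x`:
`limsup_{y→x} ‖f y - f x‖/‖y - x‖ < ∞`. -/
def LipschitzAtPt [NormedAddCommGroup X] [NormedAddCommGroup Y]
    (f : X → Y) (x : X) : Prop :=
  ∃ K > (0:ℝ), ∃ δ > (0:ℝ), ∀ y ∈ ball x δ, ‖f y - f x‖ ≤ K * ‖y - x‖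

/-- The (two-sided) Hadamard directional derivative of `f` at `x` in direction `v` is `y`:
`(f (x + t z) - f x)/t → y` as `z → v`, `t → 0`, `t ≠ 0`. -/
def HadamardDerivAt [NormedAddCommGroup X] [NormedSpace ℝ X]
    [NormedAddCommGroup Y] [NormedSpace ℝ Y]
    (f : X → Y) (x v : X) (y : Y) : Prop :=
  Tendsto (fun p : ℝ × X => p.1⁻¹ • (f (x + p.1 • p.2) - f x))
    ((𝓝[≠] (0:ℝ)) ×ˢ 𝓝 v) (𝓝 y)

/-- The one-sided Hadamard directional derivative of `f` at `x` in direction `v` is `y`: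
`(f (x + t z) - f x)/t → y` as `z → v`, `t → 0+`. -/
def HadamardPlusDerivAt [NormedAddCommGroup X] [NormedSpace ℝ X]
    [NormedAddCommGroup Y] [NormedSpace ℝ Y]
    (f : X → Y) (x v : X) (y : Y) : Prop :=
  Tendsto (fun p : ℝ × X => p.1⁻¹ • (f (x + p.1 • p.2) - f x))
    ((𝓝[>] (0:ℝ)) ×ˢ 𝓝 v) (𝓝 y)

/-- `f` is Gâteaux differentiable at `x` with derivative the continuous linear map `L`. -/
def GateauxDiffAt [NormedAddCommGroup X] [NormedSpace ℝ X]
    [NormedAddCommGroup Y] [NormedSpace ℝ Y]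
    (f : X → Y) (x : X) (L : X →L[ℝ] Y) : Prop :=
  ∀ v : X, Tendsto (fun t : ℝ => t⁻¹ • (f (x + t • v) - f x)) (𝓝[≠] (0:ℝ)) (𝓝 (L v))

/-- `f` is Hadamard differentiable at `x` with derivative the continuous linear map `L`. -/
def HadamardDiffAt [NormedAddCommGroup X] [NormedSpace ℝ X]
    [NormedAddCommGroup Y] [NormedSpace ℝ Y]
    (f : X → Y) (x : X) (L : X →L[ℝ] Y) : Prop :=
  ∀ v : X, HadamardDerivAt f x v (L v)

/-- `A` is directionally porous at `x`. -/
def DirPorousAt [NormedAddCommGroup X] [NormedSpace ℝ X] (A : Set X) (x : X) : Prop :=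
  ∃ v : X, v ≠ 0 ∧ ∃ p > (0:ℝ), ∃ t : ℕ → ℝ, (∀ n, 0 < t n) ∧
    Tendsto t atTop (𝓝 (0:ℝ)) ∧ ∀ n, ball (x + t n • v) (p * t n) ∩ A = ∅

/-- `A` is a countable union of directionally porous sets. -/
def SigmaDirPorous [NormedAddCommGroup X] [NormedSpace ℝ X] (A : Set X) : Prop :=
  ∃ S : ℕ → Set X, A = ⋃ n, S n ∧ ∀ n, ∀ x ∈ S n, DirPorousAt (S n) x

/-- `A` is porous at `x`. -/
def PorousAt [NormedAddCommGroup X] (A : Set X) (x : X) : Prop :=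
  ∃ p > (0:ℝ), ∃ y : ℕ → X, (∀ n, y n ≠ x) ∧ Tendsto y atTop (𝓝 x) ∧
    ∀ n, ball (y n) (p * ‖y n - x‖) ∩ A = ∅

/-- `A` is a countable union of porous sets. -/
def SigmaPorous [NormedAddCommGroup X] (A : Set X) : Prop :=
  ∃ S : ℕ → Set X, A = ⋃ n, S n ∧ ∀ n, ∀ x ∈ S n, PorousAt (S n) x

end CommonDefs

set_option maxHeartbeats 1000000

private lemma aux2 {X Y : Type*} [NormedAddCommGroup X] [NormedSpace ℝ X]
    [NormedAddCommGroup Y] [NormedSpace ℝ Y]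
    (f : X → Y) (S : Set X) (K δ : ℝ) (hK : 0 < K) (hδ : 0 < δ)
    (hS : ∀ y ∈ S, ∀ y' ∈ ball y δ, ‖f y' - f y‖ ≤ K * ‖y' - y‖)
    (x : X) (L : X →L[ℝ] Y) (hG : GateauxDiffAt f x L)
    (v : X) (hv : v ≠ 0) (ε : ℝ) (hε : 0 < ε)
    (T : ℕ → ℝ) (Z : ℕ → X)
    (hT0 : ∀ n, 0 < T n) (hT1 : ∀ n, T n ≤ 1 / (n + 1 : ℝ))
    (hZ : ∀ n, ‖Z n - v‖ ≤ 1 / (n + 1 : ℝ))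
    (hbad : ∀ n, ε ≤ ‖(T n)⁻¹ • (f (x + T n • Z n) - f x) - L v‖) :
    DirPorousAt S x := by
  -- Gâteaux bound in direction v
  have hG4 := Metric.tendsto_nhds.mp (hG v) (ε/4) (by positivity)
  rw [eventually_nhdsWithin_iff] at hG4
  obtain ⟨δ₂, hδ₂, hG4'⟩ := Metric.eventually_nhds_iff.mp hG4
  set p : ℝ := min (ε / (8 * K)) 1 with hp_def
  have hp : 0 < p := lt_min (by positivity) one_pos
  have hp1 : p ≤ 1 := min_le_right _ _
  have hpε : K * p ≤ ε / 8 := by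
    have : p ≤ ε / (8 * K) := min_le_left _ _
    calc K * p ≤ K * (ε / (8 * K)) := by nlinarith
    _ = ε / 8 := by field_simp
  obtain ⟨N, hN⟩ := exists_nat_one_div_lt (show (0:ℝ) < min (min p (δ/3)) δ₂ by
    exact lt_min (lt_min hp (by positivity)) hδ₂)
  have key : ∀ m : ℕ, N ≤ m → T m < min (min p (δ/3)) δ₂ ∧ 1 / (m+1 : ℝ) ≤ p := by
    intro m hm
    have h1 : (1 : ℝ) / (m + 1) ≤ 1 / (N + 1) := by
      apply one_div_le_one_div_of_le (by positivity)
      have : (N:ℝ) ≤ m := Nat.cast_le.mpr hm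
      linarith
    constructor
    · exact lt_of_le_of_lt ((hT1 m).trans h1) hN
    · exact h1.trans (le_of_lt (lt_of_lt_of_le hN ((min_le_left _ _).trans (min_le_left _ _))))
  refine ⟨v, hv, p, hp, fun n => T (n + N), fun n => hT0 _, ?_, ?_⟩
  · apply squeeze_zero (fun n => (hT0 _).le) (fun n => hT1 (n + N))
    exact tendsto_one_div_add_atTop_nhds_zero_nat.comp (tendsto_add_atTop_nat N)
  · intro n
    rw [Set.eq_empty_iff_forall_notMem]
    rintro y ⟨hyball, hyS⟩
    set m := n + N with hm_def
    have hmN : N ≤ m := by omega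
    obtain ⟨hTsmall, hmp⟩ := key m hmN
    set t := T m with ht_def
    have hT : 0 < t := hT0 m
    have hTp : t < p := lt_of_lt_of_le hTsmall ((min_le_left _ _).trans (min_le_left _ _))
    have hTδ3 : t < δ/3 := lt_of_lt_of_le hTsmall ((min_le_left _ _).trans (min_le_right _ _))
    have hTδ₂ : t < δ₂ := lt_of_lt_of_le hTsmall (min_le_right _ _)
    set c := x + t • v with hc_def
    set U := x + t • Z m with hU_def
    -- distances
    have hyc : ‖y - c‖ < p * t := by
      have := mem_ball.mp hyball
      rwa [dist_eq_norm] at this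
    have hUc : ‖U - c‖ ≤ p * t := by
      have : U - c = t • (Z m - v) := by rw [hU_def, hc_def]; module
      rw [this, norm_smul, Real.norm_eq_abs, abs_of_pos hT]
      calc t * ‖Z m - v‖ ≤ t * (1 / (m+1)) := by nlinarith [hZ m, hT.le]
      _ ≤ t * p := by nlinarith
      _ = p * t := mul_comm _ _
    -- Lipschitz at y
    have hLy := hS y hyS
    have hcy : c ∈ ball y δ := by
      rw [mem_ball, dist_eq_norm]
      have : ‖c - y‖ = ‖y - c‖ := norm_sub_rev _ _
      rw [this]
      nlinarith
    have hUy : U ∈ ball y δ := by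
      rw [mem_ball, dist_eq_norm]
      have h1 : ‖U - y‖ ≤ ‖U - c‖ + ‖c - y‖ := by
        have : U - y = (U - c) + (c - y) := by abel
        rw [this]; exact norm_add_le _ _
      rw [norm_sub_rev c y] at h1
      nlinarith
    have hfc : ‖f c - f y‖ ≤ K * ‖c - y‖ := hLy c hcy
    have hfU : ‖f U - f y‖ ≤ K * ‖U - y‖ := hLy U hUy
    have hfUc : ‖f U - f c‖ ≤ 3 * (ε/8) * t := by
      have h1 : ‖f U - f c‖ ≤ ‖f U - f y‖ + ‖f y - f c‖ := by
        have : f U - f c = (f U - f y) + (f y - f c) := by abel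
        rw [this]; exact norm_add_le _ _
      have h2 : ‖f y - f c‖ = ‖f c - f y‖ := norm_sub_rev _ _
      have h3 : ‖c - y‖ = ‖y - c‖ := norm_sub_rev _ _
      have h4 : ‖U - y‖ ≤ ‖U - c‖ + ‖c - y‖ := by
        have : U - y = (U - c) + (c - y) := by abel
        rw [this]; exact norm_add_le _ _
      have h5 : ‖U - y‖ ≤ 2 * (p * t) := by rw [h3] at h4; nlinarith
      have hKc : K * ‖c - y‖ ≤ K * (p * t) := by rw [h3]; nlinarith
      have hKU : K * ‖U - y‖ ≤ K * (2 * (p * t)) := by nlinarith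
      have : ‖f U - f c‖ ≤ K * (2 * (p * t)) + K * (p * t) := by
        calc ‖f U - f c‖ ≤ ‖f U - f y‖ + ‖f c - f y‖ := by rw [← h2]; exact h1
        _ ≤ K * ‖U - y‖ + K * ‖c - y‖ := add_le_add hfU hfc
        _ ≤ _ := add_le_add hKU hKc
      nlinarith
    -- Gâteaux estimate at scale t
    have hGt : ‖f c - f x - t • L v‖ < (ε/4) * t := by
      have h1 : dist (t⁻¹ • (f (x + t • v) - f x)) (L v) < ε/4 := by
        apply hG4' (y := t)
        · rw [Real.dist_eq, sub_zero, abs_of_pos hT]; exact hTδ₂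
        · exact hT.ne'
      rw [dist_eq_norm] at h1
      have h2 : f c - f x - t • L v = t • (t⁻¹ • (f (x + t • v) - f x) - L v) := by
        rw [smul_sub, smul_inv_smul₀ hT.ne', hc_def]
      rw [h2, norm_smul, Real.norm_eq_abs, abs_of_pos hT]
      nlinarith
    -- bad estimate at scale t
    have hBt : ε * t ≤ ‖f U - f x - t • L v‖ := by
      have h1 := hbad m
      have h2 : f U - f x - t • L v = t • ((t)⁻¹ • (f (x + t • Z m) - f x) - L v) := by
        rw [smul_sub, smul_inv_smul₀ hT.ne', hU_def]
      rw [h2, norm_smul, Real.norm_eq_abs, abs_of_pos hT]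
      nlinarith
    -- contradiction
    have htri : ‖f U - f x - t • L v‖ ≤ ‖f U - f c‖ + ‖f c - f x - t • L v‖ := by
      have : f U - f x - t • L v = (f U - f c) + (f c - f x - t • L v) := by abel
      rw [this]; exact norm_add_le _ _
    nlinarith

private lemma aux1 {X Y : Type*} [NormedAddCommGroup X] [NormedSpace ℝ X]
    [NormedAddCommGroup Y] [NormedSpace ℝ Y]
    (f : X → Y) (S : Set X) (K δ : ℝ) (hK : 0 < K) (hδ : 0 < δ)
    (hS : ∀ y ∈ S, ∀ y' ∈ ball y δ, ‖f y' - f y‖ ≤ K * ‖y' - y‖)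
    (x : X) (hx : x ∈ S) (L : X →L[ℝ] Y) (hG : GateauxDiffAt f x L)
    (hH : ¬ ∃ L' : X →L[ℝ] Y, HadamardDiffAt f x L') : DirPorousAt S x := by
  -- find a direction where the Hadamard limit with value L v₀ fails
  have hv : ∃ v₀ : X, ¬ HadamardDerivAt f x v₀ (L v₀) := by
    by_contra h
    push_neg at h
    exact hH ⟨L, fun v => h v⟩
  obtain ⟨v₀, hv₀⟩ := hv
  have hlipx := hS x hx
  -- v₀ ≠ 0
  have hv0ne : v₀ ≠ 0 := by
    rintro rfl
    apply hv₀
    have hL0 : L (0:X) = 0 := map_zero L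
    rw [HadamardDerivAt, hL0, Metric.tendsto_nhds]
    intro ε' hε'
    have h1 : ∀ᶠ r : ℝ in 𝓝[≠] (0:ℝ), |r| < δ ∧ r ≠ 0 := by
      apply Filter.Eventually.and
      · apply eventually_nhdsWithin_of_eventually_nhds
        filter_upwards [Metric.ball_mem_nhds (0:ℝ) hδ] with r hr
        rwa [mem_ball, Real.dist_eq, sub_zero] at hr
      · exact eventually_mem_nhdsWithin
    have h2 : ∀ᶠ z : X in 𝓝 (0:X), ‖z‖ < min (ε' / (2 * K)) 1 := by
      have hpos : (0:ℝ) < min (ε' / (2 * K)) 1 := lt_min (by positivity) one_pos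
      filter_upwards [Metric.ball_mem_nhds (0:X) hpos] with z hz
      rwa [mem_ball, dist_zero_right] at hz
    filter_upwards [h1.prod_mk h2] with q hq
    obtain ⟨⟨hq1, hq1ne⟩, hq2⟩ := hq
    have hq1pos : 0 < |q.1| := abs_pos.mpr hq1ne
    have hmem : x + q.1 • q.2 ∈ ball x δ := by
      rw [mem_ball, dist_eq_norm, add_sub_cancel_left, norm_smul, Real.norm_eq_abs]
      calc |q.1| * ‖q.2‖ ≤ |q.1| * 1 := by
            apply mul_le_mul_of_nonneg_left _ (abs_nonneg _)
            exact le_of_lt (lt_of_lt_of_le hq2 (min_le_right _ _))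
        _ = |q.1| := mul_one _
        _ < δ := hq1
    have hlip := hlipx _ hmem
    rw [add_sub_cancel_left, norm_smul, Real.norm_eq_abs] at hlip
    rw [dist_zero_right, norm_smul, Real.norm_eq_abs, abs_inv]
    have : |q.1|⁻¹ * ‖f (x + q.1 • q.2) - f x‖ ≤ |q.1|⁻¹ * (K * (|q.1| * ‖q.2‖)) := by
      apply mul_le_mul_of_nonneg_left hlip (by positivity)
    have heq : |q.1|⁻¹ * (K * (|q.1| * ‖q.2‖)) = K * ‖q.2‖ := by
      field_simp
    rw [heq] at this
    have h3 : K * ‖q.2‖ < K * (ε' / (2 * K)) := by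
      apply mul_lt_mul_of_pos_left _ hK
      exact lt_of_lt_of_le hq2 (min_le_left _ _)
    have h4 : K * (ε' / (2 * K)) = ε' / 2 := by field_simp
    calc |q.1|⁻¹ * ‖f (x + q.1 • q.2) - f x‖ ≤ K * ‖q.2‖ := this
      _ < ε' / 2 := by rw [← h4]; exact h3
      _ < ε' := by linarith
  -- extract ε and raw sequences
  rw [HadamardDerivAt, Metric.tendsto_nhds] at hv₀
  push_neg at hv₀
  obtain ⟨ε, hε, hfreq⟩ := hv₀
  have hstep : ∀ n : ℕ, ∃ t : ℝ, ∃ z : X, t ≠ 0 ∧ |t| < 1/(n+1 : ℝ) ∧ ‖z - v₀‖ < 1/(n+1 : ℝ) ∧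
      ε ≤ ‖t⁻¹ • (f (x + t • z) - f x) - L v₀‖ := by
    intro n
    have hpos : (0:ℝ) < 1/(n+1 : ℝ) := by positivity
    have hU : ((ball (0:ℝ) (1/(n+1:ℝ)) \ {0}) ×ˢ ball v₀ (1/(n+1:ℝ)) : Set (ℝ × X)) ∈
        (𝓝[≠] (0:ℝ)) ×ˢ 𝓝 v₀ :=
      prod_mem_prod (diff_mem_nhdsWithin_compl (Metric.ball_mem_nhds _ hpos) {0})
        (Metric.ball_mem_nhds _ hpos)
    obtain ⟨q, hqU, hqd⟩ := Filter.frequently_iff.mp hfreq hU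
    refine ⟨q.1, q.2, ?_, ?_, ?_, ?_⟩
    · exact hqU.1.2
    · have := hqU.1.1; rwa [mem_ball, Real.dist_eq, sub_zero] at this
    · have := hqU.2; rwa [mem_ball, dist_eq_norm] at this
    · rw [dist_eq_norm] at hqd; exact hqd
  choose t z ht0 htlt hzlt hbad using hstep
  -- sign case split
  have hsigns : (∃ᶠ n in atTop, t n < 0) ∨ ∃ᶠ n in atTop, 0 < t n := by
    apply Filter.frequently_or_distrib.mp
    exact Filter.Eventually.frequently (Filter.Eventually.of_forall (fun n => (ht0 n).lt_or_gt))
  rcases hsigns with hneg | hpos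
  · -- negative case: direction -v₀
    obtain ⟨φ, hφmono, hφ⟩ := Filter.extraction_of_frequently_atTop hneg
    apply aux2 f S K δ hK hδ hS x L hG (-v₀) (neg_ne_zero.mpr hv0ne) ε hε
      (fun n => -(t (φ n))) (fun n => -(z (φ n)))
    · intro n; linarith [hφ n]
    · intro n
      have h1 : -(t (φ n)) ≤ |t (φ n)| := neg_le_abs _
      have h2 : |t (φ n)| < 1/(φ n + 1 : ℝ) := htlt _
      have h3 : (1:ℝ)/(φ n + 1) ≤ 1/(n+1) := by
        apply one_div_le_one_div_of_le (by positivity)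
        have : n ≤ φ n := hφmono.le_apply
        have h4 : (n:ℝ) ≤ φ n := Nat.cast_le.mpr this
        linarith
      linarith
    · intro n
      have : -(z (φ n)) - -v₀ = -(z (φ n) - v₀) := by abel
      rw [this, norm_neg]
      have h2 := hzlt (φ n)
      have h3 : (1:ℝ)/(φ n + 1) ≤ 1/(n+1) := by
        apply one_div_le_one_div_of_le (by positivity)
        have : n ≤ φ n := hφmono.le_apply
        have h4 : (n:ℝ) ≤ φ n := Nat.cast_le.mpr this
        linarith
      linarith
    · intro n
      have h1 := hbad (φ n)
      have e1 : x + (-(t (φ n))) • (-(z (φ n))) = x + t (φ n) • z (φ n) := by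
        rw [neg_smul_neg]
      have e2 : (-(t (φ n)))⁻¹ = -(t (φ n))⁻¹ := by rw [inv_neg]
      rw [e1, e2, map_neg]
      have e3 : (-(t (φ n))⁻¹) • (f (x + t (φ n) • z (φ n)) - f x) - -(L v₀)
          = -((t (φ n))⁻¹ • (f (x + t (φ n) • z (φ n)) - f x) - L v₀) := by
        rw [neg_smul]; abel
      rw [e3, norm_neg]
      exact h1
  · -- positive case: direction v₀
    obtain ⟨φ, hφmono, hφ⟩ := Filter.extraction_of_frequently_atTop hpos
    apply aux2 f S K δ hK hδ hS x L hG v₀ hv0ne ε hε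
      (fun n => t (φ n)) (fun n => z (φ n))
    · exact fun n => hφ n
    · intro n
      have h1 : t (φ n) ≤ |t (φ n)| := le_abs_self _
      have h2 : |t (φ n)| < 1/(φ n + 1 : ℝ) := htlt _
      have h3 : (1:ℝ)/(φ n + 1) ≤ 1/(n+1) := by
        apply one_div_le_one_div_of_le (by positivity)
        have : n ≤ φ n := hφmono.le_apply
        have h4 : (n:ℝ) ≤ φ n := Nat.cast_le.mpr this
        linarith
      linarith
    · intro n
      have h2 := hzlt (φ n)
      have h3 : (1:ℝ)/(φ n + 1) ≤ 1/(n+1) := by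
        apply one_div_le_one_div_of_le (by positivity)
        have : n ≤ φ n := hφmono.le_apply
        have h4 : (n:ℝ) ≤ φ n := Nat.cast_le.mpr this
        linarith
      linarith
    · exact fun n => hbad (φ n)

theorem stmt7 {X Y : Type*} [NormedAddCommGroup X] [NormedSpace ℝ X] [CompleteSpace X]
    [TopologicalSpace.SeparableSpace X]
    [NormedAddCommGroup Y] [NormedSpace ℝ Y] [CompleteSpace Y]
    (G : Set X) (hG : IsOpen G) (f : X → Y) :
    SigmaDirPorous {x ∈ G | LipschitzAtPt f x ∧
      (∃ L : X →L[ℝ] Y, GateauxDiffAt f x L) ∧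
      ¬ (∃ L : X →L[ℝ] Y, HadamardDiffAt f x L)} := by
  set B : Set X := {x ∈ G | LipschitzAtPt f x ∧
      (∃ L : X →L[ℝ] Y, GateauxDiffAt f x L) ∧
      ¬ (∃ L : X →L[ℝ] Y, HadamardDiffAt f x L)} with hB
  refine ⟨fun n => {x ∈ B | ∀ y ∈ ball x (1 / ((n.unpair.2 : ℝ) + 1)),
      ‖f y - f x‖ ≤ ((n.unpair.1 : ℝ) + 1) * ‖y - x‖}, ?_, ?_⟩
  · apply Set.Subset.antisymm
    · intro x hx
      obtain ⟨hxG, ⟨K, hK, δ, hδ, hlip⟩, hrest⟩ := hx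
      obtain ⟨k, hk⟩ := exists_nat_ge K
      obtain ⟨m, hm⟩ := exists_nat_one_div_lt hδ
      refine Set.mem_iUnion.mpr ⟨Nat.pair k m, ⟨⟨hxG, ⟨K, hK, δ, hδ, hlip⟩, hrest⟩, ?_⟩⟩
      rw [Nat.unpair_pair]
      intro y hy
      have hy' : y ∈ ball x δ := by
        rw [mem_ball] at hy ⊢
        exact hy.trans hm
      calc ‖f y - f x‖ ≤ K * ‖y - x‖ := hlip y hy'
        _ ≤ ((k : ℝ) + 1) * ‖y - x‖ := by
            apply mul_le_mul_of_nonneg_right _ (norm_nonneg _)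
            linarith
    · intro x hx
      obtain ⟨n, hn, -⟩ := Set.mem_iUnion.mp hx
      exact hn
  · rintro n x ⟨hxB, hxlip⟩
    obtain ⟨hxG, hL, ⟨L, hGx⟩, hH⟩ := hxB
    exact aux1 f _ ((n.unpair.1 : ℝ) + 1) (1 / ((n.unpair.2 : ℝ) + 1))
      (by positivity) (by positivity)
      (fun y hy => hy.2) x ⟨⟨hxG, hL, ⟨L, hGx⟩, hH⟩, hxlip⟩ L hGx hH
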